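/- arXiv:2001.02071 — 3 statements merged into one kernel-verified Lean document; each statement's English description precedes it below -/
import Mathlib

section
/- Under Assumption G (each u_i is upper semicontinuous, concave, u_i(x⁰_i) finite, and u_i(x + r·g) > u_i(x) whenever u_i(x) > −∞ and r > 0): if the allocation x⁰ = (x⁰_i)_{i∈I} is Pareto efficient, then x⁰ is a double auction equilibrium, i.e. CS(x⁰) := sup{∑_i D_i(x_i) : ∑_i x_i = 0} = 0. -/
open scoped BigOperators
open Metric Filter

noncomputable section

/-- The inner product `p·y = ∑ j, p j * y j`. -/
def dotp {J : Type*} [Fintype J] (p y : EuclideanSpace ℝ J) : ℝ := ∑ j, p j * y j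

/-- A function `u : ℝ^J → ℝ ∪ {±∞}` is concave iff its hypograph is convex. -/
def HypoConcave {J : Type*} [Fintype J] (u : EuclideanSpace ℝ J → EReal) : Prop :=
  Convex ℝ {q : EuclideanSpace ℝ J × ℝ | (q.2 : EReal) ≤ u q.1}

/-- Indifference price function `D(x) = sup {r ∈ ℝ : u(x⁰ + x − r·g) ≥ u(x⁰)}`,
the supremum being taken in `ℝ ∪ {±∞}`. -/
def indiff {J : Type*} [Fintype J] (u : EuclideanSpace ℝ J → EReal)
    (x0 g x : EuclideanSpace ℝ J) : EReal :=
  sSup {e : EReal | ∃ r : ℝ, e = (r : EReal) ∧ u x0 ≤ u (x0 + x - r • g)}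

/-- `p` is a supergradient of `D` at `xb`: `D xb` is finite and
`D x ≤ D xb + p·(x − xb)` for all `x`. -/
def IsSupergradient {J : Type*} [Fintype J] (D : EuclideanSpace ℝ J → EReal)
    (p xb : EuclideanSpace ℝ J) : Prop :=
  D xb ≠ ⊥ ∧ D xb ≠ ⊤ ∧ ∀ x, D x ≤ D xb + ((dotp p (x - xb) : ℝ) : EReal)

/-- Optimal value `v(z)` of the perturbed market clearing problem `(P_z)`. -/
def marketValue {I J : Type*} [Fintype I] [Fintype J]
    (D : I → EuclideanSpace ℝ J → EReal) (z : EuclideanSpace ℝ J) : EReal :=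
  sSup {e : EReal | ∃ x : I → EuclideanSpace ℝ J, (∑ i, x i) = z ∧ e = ∑ i, D i (x i)}

/-- Optimal value of problem `(P')`, the total consumer surplus at allocation `w`. -/
def CSval {I J : Type*} [Fintype I] [Fintype J]
    (u : I → EuclideanSpace ℝ J → EReal) (g : EuclideanSpace ℝ J)
    (w : I → EuclideanSpace ℝ J) : EReal :=
  sSup {e : EReal | ∃ s : ℝ, e = (s : EReal) ∧ ∃ z : I → EuclideanSpace ℝ J,
    (∑ i, z i) + s • g = ∑ i, w i ∧ ∀ i, u i (w i) ≤ u i (z i)}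

/-- Recession function `u^∞(y) = inf_{α>0} (u(x⁰ + α·y) − u(x⁰))/α`. -/
def recession {J : Type*} [Fintype J] (u : EuclideanSpace ℝ J → EReal)
    (x0 y : EuclideanSpace ℝ J) : EReal :=
  sInf {e : EReal | ∃ α : ℝ, 0 < α ∧ e = (u (x0 + α • y) - u x0) / (α : EReal)}

/-- Pareto efficiency of an allocation `x` with total endowment `∑ i, x i`. -/
def ParetoEfficient {I J : Type*} [Fintype I] [Fintype J]
    (u : I → EuclideanSpace ℝ J → EReal) (x : I → EuclideanSpace ℝ J) : Prop :=
  ¬ ∃ x' : I → EuclideanSpace ℝ J, (∑ i, x' i) = (∑ i, x i) ∧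
      (∀ i, u i (x i) ≤ u i (x' i)) ∧ ∃ i, u i (x i) < u i (x' i)


lemma ereal_coe_sum {ι : Type*} (s : Finset ι) (f : ι → ℝ) :
    ((∑ i ∈ s, f i : ℝ) : EReal) = ∑ i ∈ s, (f i : EReal) := by
  induction s using Finset.cons_induction with
  | empty => simp
  | cons i s hi ih => simp [Finset.sum_cons, ih]

lemma ereal_sum_eq_bot {ι : Type*} [Fintype ι] (f : ι → EReal) (i : ι) (h : f i = ⊥) :
    (∑ j, f j) = ⊥ := by
  classical
  rw [← Finset.add_sum_erase _ f (Finset.mem_univ i), h, EReal.bot_add]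

lemma extract {ι : Type*} [Fintype ι] [Nonempty ι] (D : ι → EReal) (h : 0 < ∑ i, D i) :
    ∃ b : ι → ℝ, (∀ i, (b i : EReal) < D i) ∧ 0 < ∑ i, b i := by
  classical
  have hbot : ∀ i, D i ≠ ⊥ := by
    intro i hi
    rw [ereal_sum_eq_bot D i hi] at h
    exact absurd h (by simp)
  by_cases htop : ∃ i0, D i0 = ⊤
  · obtain ⟨i0, hi0⟩ := htop
    have hc : ∀ i, ∃ c : ℝ, (c : EReal) < D i := by
      intro i
      obtain ⟨y, _, hy2⟩ := EReal.exists_between_coe_real ((hbot i).bot_lt)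
      exact ⟨y, hy2⟩
    choose c hc using hc
    refine ⟨Function.update c i0 (1 - ∑ i ∈ Finset.univ.erase i0, c i), ?_, ?_⟩
    · intro i
      by_cases hii : i = i0
      · subst hii; rw [hi0, Function.update_self]; exact EReal.coe_lt_top _
      · rw [Function.update_of_ne hii]; exact hc i
    · rw [← Finset.add_sum_erase _ _ (Finset.mem_univ i0), Function.update_self]
      have : ∑ i ∈ Finset.univ.erase i0, Function.update c i0
          (1 - ∑ i ∈ Finset.univ.erase i0, c i) i = ∑ i ∈ Finset.univ.erase i0, c i := by
        apply Finset.sum_congr rfl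
        intro i hi
        exact Function.update_of_ne (Finset.ne_of_mem_erase hi) _ _
      rw [this]; ring_nf; norm_num
  · push_neg at htop
    set c : ι → ℝ := fun i => (D i).toReal with hcdef
    have hDc : ∀ i, D i = (c i : EReal) := fun i => (EReal.coe_toReal (htop i) (hbot i)).symm
    have hsum : (0 : EReal) < ((∑ i, c i : ℝ) : EReal) := by
      rw [ereal_coe_sum]
      calc (0:EReal) < ∑ i, D i := h
        _ = ∑ i, (c i : EReal) := Finset.sum_congr rfl (fun i _ => hDc i)
    have hS : 0 < ∑ i, c i := EReal.coe_pos.mp hsum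
    set S := ∑ i, c i
    set n : ℝ := (Fintype.card ι : ℝ)
    have hn : 0 < n := by
      simp only [n]
      exact_mod_cast Fintype.card_pos
    refine ⟨fun i => c i - S / (2 * n), ?_, ?_⟩
    · intro i
      rw [hDc i]
      exact_mod_cast sub_lt_self _ (by positivity)
    · rw [Finset.sum_sub_distrib, Finset.sum_const, nsmul_eq_mul]
      have hcard : ((Finset.univ (α := ι)).card : ℝ) = n := by simp [n]
      rw [hcard]
      have : n * (S / (2 * n)) = S / 2 := by field_simp
      rw [this]
      linarith

lemma indiff_zero {J : Type*} [Fintype J] (u : EuclideanSpace ℝ J → EReal)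
    (x0 g : EuclideanSpace ℝ J) (hfin : u x0 ≠ ⊥)
    (hmono : ∀ x : EuclideanSpace ℝ J, ∀ r : ℝ, u x ≠ ⊥ → 0 < r → u x < u (x + r • g)) :
    indiff u x0 g 0 = 0 := by
  apply le_antisymm
  · apply sSup_le
    rintro e ⟨r, rfl, hr⟩
    show (r : EReal) ≤ 0
    by_contra hrpos
    have hr0 : 0 < r := by exact_mod_cast (not_le.mp hrpos)
    have hyb : u (x0 + 0 - r • g) ≠ ⊥ := by
      intro hb
      rw [hb] at hr
      exact hfin (le_bot_iff.mp hr)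
    have hlt := hmono (x0 + 0 - r • g) r hyb hr0
    have heq : (x0 + 0 - r • g) + r • g = x0 := by module
    rw [heq] at hlt
    exact absurd (lt_of_le_of_lt hr hlt) (lt_irrefl _)
  · apply le_sSup
    exact ⟨0, rfl, by simp⟩

/-- Theorem pareto, first part: Pareto allocations are double
auction equilibria. -/
theorem pareto_implies_equilibrium
    {I J : Type*} [Fintype I] [Nonempty I] [Fintype J] [Nonempty J]
    (u : I → EuclideanSpace ℝ J → EReal) (g : EuclideanSpace ℝ J)
    (x0 : I → EuclideanSpace ℝ J)
    (husc : ∀ i, UpperSemicontinuous (u i))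
    (hconc : ∀ i, HypoConcave (u i))
    (hne_top : ∀ i x, u i x ≠ ⊤)
    (hfin : ∀ i, u i (x0 i) ≠ ⊥)
    (hmono : ∀ i, ∀ x : EuclideanSpace ℝ J, ∀ r : ℝ, u i x ≠ ⊥ → 0 < r →
      u i x < u i (x + r • g))
    (hpareto : ParetoEfficient u x0) :
    marketValue (fun i => indiff (u i) (x0 i) g) 0 = 0 := by
  classical
  apply le_antisymm
  · apply sSup_le
    rintro e ⟨x, hsum, rfl⟩
    by_contra hpos
    push_neg at hpos
    obtain ⟨b, hb, hbpos⟩ := extract _ hpos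
    have hr : ∀ i, ∃ r : ℝ, b i < r ∧ u i (x0 i) ≤ u i (x0 i + x i - r • g) := by
      intro i
      obtain ⟨e', ⟨r, rfl, hcond⟩, hlt⟩ := lt_sSup_iff.mp (hb i)
      exact ⟨r, by exact_mod_cast hlt, hcond⟩
    choose r hr1 hr2 using hr
    have hspos : 0 < ∑ i, r i :=
      lt_of_lt_of_le hbpos (Finset.sum_le_sum fun i _ => (hr1 i).le)
    set s : ℝ := ∑ i, r i with hsdef
    set n : ℝ := (Fintype.card I : ℝ) with hndef
    have hn : 0 < n := by
      simp only [hndef]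
      exact_mod_cast Fintype.card_pos
    set x' : I → EuclideanSpace ℝ J := fun i => x0 i + x i - r i • g + (s / n) • g with hx'
    have key : ∀ i, u i (x0 i) < u i (x' i) := by
      intro i
      have hyb : u i (x0 i + x i - r i • g) ≠ ⊥ := by
        intro hbot
        have := hr2 i
        rw [hbot] at this
        exact hfin i (le_bot_iff.mp this)
      have hlt := hmono i (x0 i + x i - r i • g) (s / n) hyb (by positivity)
      exact lt_of_le_of_lt (hr2 i) hlt
    apply hpareto
    refine ⟨x', ?_, fun i => (key i).le, Classical.arbitrary I, key _⟩
    have h1 : ∑ i, x' i = (∑ i, x0 i + ∑ i, x i - (∑ i, r i • g)) + ∑ _i : I, (s / n) • g := by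
      simp only [hx', Finset.sum_add_distrib, Finset.sum_sub_distrib]
    have h2 : ∑ i, r i • g = s • g := by rw [← Finset.sum_smul]
    have h3 : ∑ _i : I, (s / n) • g = s • g := by
      rw [Finset.sum_const, Finset.card_univ]
      rw [← Nat.cast_smul_eq_nsmul ℝ, smul_smul]
      congr 1
      rw [← hndef]
      field_simp
    rw [h1, h2, h3, hsum]
    module
  · apply le_sSup
    refine ⟨fun _ => 0, by simp, ?_⟩
    have : ∀ i, indiff (u i) (x0 i) g 0 = 0 := fun i =>
      indiff_zero (u i) (x0 i) g (hfin i) (hmono i)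
    simp [this]
end
end

section
/- Suppose Assumption G holds (each u_i is upper semicontinuous, concave, u_i(x⁰_i) finite, and u_i(x + r·g) > u_i(x) whenever u_i(x) > −∞ and r > 0) and Assumption S holds: there is ε > 0 such that v(z) := sup{∑_i D_i(x_i) : ∑_i x_i = z} is finite for all ‖z‖ ≤ ε. If the allocation x⁰ = (x⁰_i)_{i∈I} is Pareto efficient, then there exists a price vector p ∈ ℝ^J with p·g = 1 such that for every i ∈ I, p·w ≥ p·x⁰_i for all w ∈ ℝ^J with u_i(w) ≥ u_i(x⁰_i). -/
open scoped BigOperators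
open Metric Filter

noncomputable section

/-! Auxiliary development -/

def Cset {I J : Type*} [Fintype I] [Fintype J] (u : I → EuclideanSpace ℝ J → EReal)
    (g : EuclideanSpace ℝ J) (x0 : I → EuclideanSpace ℝ J) : Set (EuclideanSpace ℝ J × ℝ) :=
  {q | ∃ (x : I → EuclideanSpace ℝ J) (r : I → ℝ), (∑ i, x i) = q.1 ∧ q.2 ≤ ∑ i, r i ∧
    ∀ i, u i (x0 i) ≤ u i (x0 i + x i - r i • g)}

theorem Cset_down {I J : Type*} [Fintype I] [Fintype J] {u : I → EuclideanSpace ℝ J → EReal}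
    {g : EuclideanSpace ℝ J} {x0 : I → EuclideanSpace ℝ J} {z : EuclideanSpace ℝ J} {t t' : ℝ}
    (h : (z, t) ∈ Cset u g x0) (ht : t' ≤ t) : (z, t') ∈ Cset u g x0 := by
  obtain ⟨x, r, h1, h2, h3⟩ := h
  exact ⟨x, r, h1, le_trans ht h2, h3⟩

theorem Cset_convex {I J : Type*} [Fintype I] [Fintype J] {u : I → EuclideanSpace ℝ J → EReal}
    {g : EuclideanSpace ℝ J} {x0 : I → EuclideanSpace ℝ J}
    (hconc : ∀ i, HypoConcave (u i)) (hne_top : ∀ i x, u i x ≠ ⊤) (hfin : ∀ i, u i (x0 i) ≠ ⊥) :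
    Convex ℝ (Cset u g x0) := by
  rintro ⟨z, t⟩ ⟨x, r, h1, h2, h3⟩ ⟨z', t'⟩ ⟨x', r', h1', h2', h3'⟩ a b ha hb hab
  refine ⟨fun i => a • x i + b • x' i, fun i => a * r i + b * r' i, ?_, ?_, ?_⟩
  · simp only [Finset.sum_add_distrib, ← Finset.smul_sum, h1, h1']
    rfl
  · have : (a • (z,t) + b • (z',t')).2 = a * t + b * t' := rfl
    rw [this, Finset.sum_add_distrib, ← Finset.mul_sum, ← Finset.mul_sum]
    exact add_le_add (mul_le_mul_of_nonneg_left h2 ha) (mul_le_mul_of_nonneg_left h2' hb)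
  · intro i
    set c : ℝ := (u i (x0 i)).toReal with hc
    have hcoe : (c : EReal) = u i (x0 i) := EReal.coe_toReal (hne_top i _) (hfin i)
    have m1 : ((x0 i + x i - r i • g, c) : EuclideanSpace ℝ J × ℝ) ∈
        {q : EuclideanSpace ℝ J × ℝ | (q.2 : EReal) ≤ u i q.1} := by
      simpa [hcoe] using h3 i
    have m2 : ((x0 i + x' i - r' i • g, c) : EuclideanSpace ℝ J × ℝ) ∈
        {q : EuclideanSpace ℝ J × ℝ | (q.2 : EReal) ≤ u i q.1} := by
      simpa [hcoe] using h3' i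
    have := hconc i m1 m2 ha hb hab
    have harg : a • (x0 i + x i - r i • g) + b • (x0 i + x' i - r' i • g)
        = x0 i + (a • x i + b • x' i) - (a * r i + b * r' i) • g := by
      have hb' : b = 1 - a := by linarith
      subst hb'
      module
    have hsnd : (a • ((x0 i + x i - r i • g, c) : EuclideanSpace ℝ J × ℝ)
        + b • (x0 i + x' i - r' i • g, c)).2 = c := by
      simp only [Prod.smul_snd, Prod.snd_add, smul_eq_mul, ← add_mul, hab, one_mul]
    rw [Set.mem_setOf_eq] at this
    rw [hsnd] at this
    have hfst : (a • ((x0 i + x i - r i • g, c) : EuclideanSpace ℝ J × ℝ)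
        + b • (x0 i + x' i - r' i • g, c)).1
        = x0 i + (a • x i + b • x' i) - (a * r i + b * r' i) • g := by
      simp only [Prod.smul_fst, Prod.fst_add]; exact harg
    rw [hfst] at this
    rw [← hcoe]
    exact this

theorem Cset_single {I J : Type*} [Fintype I] [Fintype J] {u : I → EuclideanSpace ℝ J → EReal}
    {g : EuclideanSpace ℝ J} {x0 : I → EuclideanSpace ℝ J} (i0 : I)
    {v : EuclideanSpace ℝ J} {r0 : ℝ} (h : u i0 (x0 i0) ≤ u i0 (x0 i0 + v - r0 • g)) :
    (v, r0) ∈ Cset u g x0 := by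
  classical
  refine ⟨fun i => if i = i0 then v else 0, fun i => if i = i0 then r0 else 0, ?_, ?_, ?_⟩
  · simp [Finset.sum_ite_eq']
  · simp [Finset.sum_ite_eq']
  · intro i
    by_cases hi : i = i0
    · subst hi; simpa using h
    · simp [hi]

theorem Cset_zero {I J : Type*} [Fintype I] [Fintype J] {u : I → EuclideanSpace ℝ J → EReal}
    {g : EuclideanSpace ℝ J} {x0 : I → EuclideanSpace ℝ J} [Nonempty I] :
    ((0 : EuclideanSpace ℝ J), (0 : ℝ)) ∈ Cset u g x0 := by
  refine Cset_single (Classical.arbitrary I) ?_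
  simp

theorem Cset_rg {I J : Type*} [Fintype I] [Fintype J] {u : I → EuclideanSpace ℝ J → EReal}
    {g : EuclideanSpace ℝ J} {x0 : I → EuclideanSpace ℝ J} [Nonempty I] (r : ℝ) :
    ((r • g : EuclideanSpace ℝ J), r) ∈ Cset u g x0 := by
  refine Cset_single (Classical.arbitrary I) ?_
  simp

theorem Cset_not_pos {I J : Type*} [Fintype I] [Nonempty I] [Fintype J]
    {u : I → EuclideanSpace ℝ J → EReal} {g : EuclideanSpace ℝ J}
    {x0 : I → EuclideanSpace ℝ J}
    (hfin : ∀ i, u i (x0 i) ≠ ⊥)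
    (hmono : ∀ i, ∀ x : EuclideanSpace ℝ J, ∀ r : ℝ, u i x ≠ ⊥ → 0 < r →
      u i x < u i (x + r • g))
    (hpareto : ParetoEfficient u x0) {t : ℝ} (ht : 0 < t) :
    ((0 : EuclideanSpace ℝ J), t) ∉ Cset u g x0 := by
  rintro ⟨x, r, h1, h2, h3⟩
  apply hpareto
  set s : ℝ := ∑ i, r i with hs
  have hspos : 0 < s := lt_of_lt_of_le ht h2
  set n : ℕ := Fintype.card I with hn
  have hnpos : 0 < (n : ℝ) := by
    exact_mod_cast Fintype.card_pos
  refine ⟨fun i => x0 i + x i - r i • g + (s / n) • g, ?_, ?_, ?_⟩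
  · have hsum : ∑ i : I, (x0 i + x i - r i • g + (s / n) • g)
        = (∑ i, x0 i) + (∑ i, x i) - (∑ i, r i) • g + (n : ℝ) • ((s / n) • g) := by
      rw [Finset.sum_add_distrib, Finset.sum_sub_distrib, Finset.sum_add_distrib,
        Finset.sum_smul, Finset.sum_const, Finset.card_univ, ← Nat.cast_smul_eq_nsmul ℝ]
    rw [hsum, h1]
    have : (n : ℝ) • ((s / n) • g) = s • g := by
      rw [smul_smul]
      congr 1
      field_simp
    rw [this]
    simp [hs]
  · intro i
    have hb : u i (x0 i) ≤ u i (x0 i + x i - r i • g) := h3 i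
    have hnb : u i (x0 i + x i - r i • g) ≠ ⊥ := by
      intro hcon
      exact hfin i (le_bot_iff.mp (hcon ▸ hb))
    exact le_of_lt (lt_of_le_of_lt hb (hmono i _ _ hnb (by positivity)))
  · refine ⟨Classical.arbitrary I, ?_⟩
    set i := Classical.arbitrary I
    have hb : u i (x0 i) ≤ u i (x0 i + x i - r i • g) := h3 i
    have hnb : u i (x0 i + x i - r i • g) ≠ ⊥ := by
      intro hcon
      exact hfin i (le_bot_iff.mp (hcon ▸ hb))
    exact lt_of_le_of_lt hb (hmono i _ _ hnb (by positivity))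

theorem EReal.sum_ne_bot_term {I : Type*} [Fintype I] {f : I → EReal}
    (h : (∑ i, f i) ≠ ⊥) (k : I) : f k ≠ ⊥ := by
  classical
  intro hk
  apply h
  rw [← Finset.add_sum_erase Finset.univ f (Finset.mem_univ k), hk]
  exact EReal.bot_add _

theorem Cset_of_mv {I J : Type*} [Fintype I] [Fintype J]
    {u : I → EuclideanSpace ℝ J → EReal} {g : EuclideanSpace ℝ J}
    {x0 : I → EuclideanSpace ℝ J} {z : EuclideanSpace ℝ J}
    (h : marketValue (fun i => indiff (u i) (x0 i) g) z ≠ ⊥) :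
    ∃ t : ℝ, (z, t) ∈ Cset u g x0 := by
  have : ∃ e ∈ {e : EReal | ∃ x : I → EuclideanSpace ℝ J, (∑ i, x i) = z ∧
      e = ∑ i, indiff (u i) (x0 i) g (x i)}, e ≠ ⊥ := by
    by_contra hcon
    push_neg at hcon
    exact h (sSup_eq_bot.mpr hcon)
  obtain ⟨e, ⟨x, hx, he⟩, hnb⟩ := this
  rw [he] at hnb
  have hterm : ∀ i, indiff (u i) (x0 i) g (x i) ≠ ⊥ := fun i => EReal.sum_ne_bot_term hnb i
  have hr : ∀ i, ∃ r : ℝ, u i (x0 i) ≤ u i (x0 i + x i - r • g) := by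
    intro i
    by_contra hc
    push_neg at hc
    apply hterm i
    have : {e : EReal | ∃ r : ℝ, e = (r : EReal) ∧ u i (x0 i) ≤ u i (x0 i + x i - r • g)} = ∅ := by
      ext e'
      simp only [Set.mem_setOf_eq, Set.mem_empty_iff_false, iff_false]
      rintro ⟨r, _, hle⟩
      exact absurd hle (not_le.mpr (hc r))
    unfold indiff
    rw [this, sSup_empty]
  choose r hrr using hr
  exact ⟨∑ i, r i, x, r, hx, le_refl _, hrr⟩

theorem crosspoly_mem {J : Type*} [Fintype J] [DecidableEq J] {C : Set (EuclideanSpace ℝ J × ℝ)}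
    (hC : Convex ℝ C) {ε m : ℝ} (hε : 0 < ε)
    (hpts : ∀ (j : J) (s : ℝ), |s| = ε → ((EuclideanSpace.single j s : EuclideanSpace ℝ J), m) ∈ C)
    (h0 : ((0 : EuclideanSpace ℝ J), m) ∈ C)
    {z : EuclideanSpace ℝ J} (hz : (∑ j, |z j|) ≤ ε) : (z, m) ∈ C := by
  set w : Option J → ℝ := fun q => Option.elim q (1 - (∑ j, |z j|) / ε) (fun j => |z j| / ε) with hw
  set pt : Option J → EuclideanSpace ℝ J × ℝ := fun q =>
    Option.elim q ((0 : EuclideanSpace ℝ J), m)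
      (fun j => ((EuclideanSpace.single j (if 0 ≤ z j then ε else -ε) : EuclideanSpace ℝ J), m))
    with hpt
  have hwnn : ∀ q ∈ Finset.univ, 0 ≤ w q := by
    rintro (_ | j) _
    · simp only [w, Option.elim]
      have : (∑ j, |z j|) / ε ≤ 1 := by
        rw [div_le_one hε]; exact hz
      linarith
    · simp only [w, Option.elim]
      positivity
  have hwsum : ∑ q : Option J, w q = 1 := by
    rw [Fintype.sum_option]
    simp only [w, Option.elim]
    rw [← Finset.sum_div]
    ring
  have hptC : ∀ q ∈ Finset.univ, pt q ∈ C := by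
    rintro (_ | j) _
    · exact h0
    · refine hpts j _ ?_
      by_cases h : 0 ≤ z j
      · simp [h, abs_of_pos hε]
      · simp [h, abs_of_pos hε]
  have hmem := hC.sum_mem hwnn hwsum hptC
  have hsum : (∑ q : Option J, w q • pt q) = (z, m) := by
    refine Prod.ext ?_ ?_
    · rw [Prod.fst_sum]
      have h1 : ∀ q : Option J, (w q • pt q).1 = w q • (pt q).1 := fun q => rfl
      simp only [h1]
      rw [Fintype.sum_option]
      simp only [w, pt, Option.elim, smul_zero, zero_add]
      ext k
      rw [WithLp.ofLp_sum, Finset.sum_apply]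
      simp only [PiLp.smul_apply, EuclideanSpace.single_apply, smul_eq_mul, mul_ite, mul_zero]
      rw [Finset.sum_ite_eq]
      simp only [Finset.mem_univ, if_true]
      by_cases h : 0 ≤ z k
      · rw [if_pos h, abs_of_nonneg h]; field_simp
      · rw [if_neg h, abs_of_neg (not_le.mp h)]; field_simp
    · rw [Prod.snd_sum]
      have h2 : ∀ q : Option J, (w q • pt q).2 = w q * m := by rintro (_ | j) <;> rfl
      simp only [h2]
      rw [← Finset.sum_mul, hwsum, one_mul]
  rwa [hsum] at hmem

theorem abs_coord_le_norm {J : Type*} [Fintype J] (z : EuclideanSpace ℝ J) (j : J) :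
    |z j| ≤ ‖z‖ := by
  rw [EuclideanSpace.norm_eq]
  have h1 : |z j| = Real.sqrt (|z j| ^ 2) := by rw [Real.sqrt_sq (abs_nonneg _)]
  rw [h1]
  apply Real.sqrt_le_sqrt
  exact Finset.single_le_sum (f := fun i => |z i| ^ 2) (fun i _ => sq_nonneg _) (Finset.mem_univ j)

theorem dotp_sub {J : Type*} [Fintype J] (p w v : EuclideanSpace ℝ J) :
    dotp p (w - v) = dotp p w - dotp p v := by
  unfold dotp
  rw [← Finset.sum_sub_distrib]
  refine Finset.sum_congr rfl fun j _ => ?_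
  have : (w - v) j = w j - v j := rfl
  rw [this]; ring

/-- Corollary ve, first part: every Pareto allocation admits a
supporting price vector. -/
theorem pareto_supporting_price
    {I J : Type*} [Fintype I] [Nonempty I] [Fintype J] [Nonempty J]
    (u : I → EuclideanSpace ℝ J → EReal) (g : EuclideanSpace ℝ J)
    (x0 : I → EuclideanSpace ℝ J)
    (husc : ∀ i, UpperSemicontinuous (u i))
    (hconc : ∀ i, HypoConcave (u i))
    (hne_top : ∀ i x, u i x ≠ ⊤)
    (hfin : ∀ i, u i (x0 i) ≠ ⊥)
    (hmono : ∀ i, ∀ x : EuclideanSpace ℝ J, ∀ r : ℝ, u i x ≠ ⊥ → 0 < r →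
      u i x < u i (x + r • g))
    (hS : ∃ ε : ℝ, 0 < ε ∧ ∀ z : EuclideanSpace ℝ J, ‖z‖ ≤ ε →
      marketValue (fun i => indiff (u i) (x0 i) g) z ≠ ⊥ ∧
      marketValue (fun i => indiff (u i) (x0 i) g) z ≠ ⊤)
    (hpareto : ParetoEfficient u x0) :
    ∃ p : EuclideanSpace ℝ J, dotp p g = 1 ∧
      ∀ i, ∀ w : EuclideanSpace ℝ J, u i (x0 i) ≤ u i w →
        dotp p (x0 i) ≤ dotp p w := by
  classical
  obtain ⟨ε, hε, hSz⟩ := hS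
  set C := Cset u g x0 with hCdef
  have hCconv : Convex ℝ C := Cset_convex hconc hne_top hfin
  have hball : ∀ z : EuclideanSpace ℝ J, ‖z‖ ≤ ε → ∃ t, (z, t) ∈ C :=
    fun z hz => Cset_of_mv (hSz z hz).1
  -- vertices of the cross-polytope
  have hpts0 : ∀ q : J × Bool,
      ∃ t, ((EuclideanSpace.single q.1 (if q.2 then ε else -ε) : EuclideanSpace ℝ J), t) ∈ C := by
    intro q
    apply hball
    rw [EuclideanSpace.norm_single]
    rcases q.2 with _ | _ <;> simp [abs_of_pos hε, hε.le]
  choose tq htq using hpts0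
  set m : ℝ := min 0 (Finset.univ.inf' Finset.univ_nonempty tq) - 1 with hm
  have hm_le : ∀ q : J × Bool, m ≤ tq q := by
    intro q
    have h1 : Finset.univ.inf' Finset.univ_nonempty tq ≤ tq q :=
      Finset.inf'_le _ (Finset.mem_univ q)
    have h2 : m ≤ Finset.univ.inf' Finset.univ_nonempty tq := by
      rw [hm]
      have := min_le_right 0 (Finset.univ.inf' Finset.univ_nonempty tq)
      linarith
    linarith
  have hmneg : m < 0 := by
    rw [hm]
    have := min_le_left 0 (Finset.univ.inf' Finset.univ_nonempty tq)
    linarith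
  have hpts : ∀ (j : J) (s : ℝ), |s| = ε →
      ((EuclideanSpace.single j s : EuclideanSpace ℝ J), m) ∈ C := by
    intro j s hs
    rcases (abs_eq hε.le).mp hs with h | h
    · subst h
      have := htq (j, true)
      simp only [if_true] at this
      exact Cset_down this (hm_le (j, true))
    · subst h
      have := htq (j, false)
      simp only [if_neg Bool.false_ne_true] at this
      exact Cset_down this (hm_le (j, false))
  have h0m : ((0 : EuclideanSpace ℝ J), m) ∈ C := Cset_down Cset_zero hmneg.le
  -- an open subset of C
  set ρ : ℝ := ε / (Fintype.card J) with hρdef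
  have hcardpos : 0 < (Fintype.card J : ℝ) := by exact_mod_cast Fintype.card_pos
  have hρ : 0 < ρ := by positivity
  set U : Set (EuclideanSpace ℝ J × ℝ) := (Metric.ball (0 : EuclideanSpace ℝ J) ρ) ×ˢ (Set.Iio m)
    with hUdef
  have hU : U ⊆ C := by
    rintro ⟨z, t⟩ ⟨hz, ht⟩
    have hz' : ‖z‖ < ρ := by simpa [Metric.mem_ball] using hz
    have hsumabs : (∑ j, |z j|) ≤ ε := by
      calc (∑ j, |z j|) ≤ ∑ _j : J, ‖z‖ :=
            Finset.sum_le_sum (fun j _ => abs_coord_le_norm z j)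
        _ = (Fintype.card J : ℝ) * ‖z‖ := by
            rw [Finset.sum_const, Finset.card_univ, nsmul_eq_mul]
        _ ≤ (Fintype.card J : ℝ) * ρ := by
            exact mul_le_mul_of_nonneg_left hz'.le hcardpos.le
        _ = ε := by rw [hρdef]; field_simp
    exact Cset_down (crosspoly_mem hCconv hε hpts h0m hsumabs) (le_of_lt ht)
  have hUopen : IsOpen U := Metric.isOpen_ball.prod isOpen_Iio
  have hintmem : ((0 : EuclideanSpace ℝ J), m - 1) ∈ interior C := by
    apply interior_maximal hU hUopen
    exact ⟨by simpa using hρ, by simp⟩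
  -- (0,0) is not in the interior of C
  have hnotint : ((0 : EuclideanSpace ℝ J), (0 : ℝ)) ∉ interior C := by
    intro h
    rw [mem_interior_iff_mem_nhds] at h
    obtain ⟨δ, hδ, hb⟩ := Metric.mem_nhds_iff.mp h
    have hmem : ((0 : EuclideanSpace ℝ J), δ / 2) ∈ C := by
      apply hb
      rw [Metric.mem_ball, Prod.dist_eq]
      have hd1 : dist (0 : EuclideanSpace ℝ J) (0 : EuclideanSpace ℝ J) = 0 := dist_self _
      have hd2 : dist (δ / 2) (0 : ℝ) = δ / 2 := by
        rw [Real.dist_eq, sub_zero, abs_of_pos (half_pos hδ)]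
      rw [hd1, hd2]
      apply max_lt <;> linarith
    exact Cset_not_pos hfin hmono hpareto (half_pos hδ) hmem
  -- separation
  obtain ⟨f, hf⟩ := geometric_hahn_banach_open_point hCconv.interior isOpen_interior hnotint
  have hf0 : f ((0 : EuclideanSpace ℝ J), (0 : ℝ)) = 0 := by
    have : ((0 : EuclideanSpace ℝ J), (0 : ℝ)) = (0 : EuclideanSpace ℝ J × ℝ) := rfl
    rw [this, map_zero]
  rw [hf0] at hf
  -- f is nonpositive on all of C
  have hfC : ∀ a ∈ C, f a ≤ 0 := by
    intro y hy
    by_contra hpos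
    push_neg at hpos
    set xI : EuclideanSpace ℝ J × ℝ := ((0 : EuclideanSpace ℝ J), m - 1) with hxI
    set d : ℝ := f xI - f y with hd
    set a : ℝ := min 1 (f y / (2 * (|d| + 1))) with ha'
    have hdpos : 0 < 2 * (|d| + 1) := by positivity
    have ha : 0 < a := lt_min one_pos (by positivity)
    have ha1 : a ≤ 1 := min_le_left _ _
    have hale : a ≤ f y / (2 * (|d| + 1)) := min_le_right _ _
    have hcombo := hf _ (hCconv.combo_interior_self_mem_interior hintmem hy ha
      (by linarith : (0:ℝ) ≤ 1 - a) (by ring))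
    rw [map_add, map_smul, map_smul, smul_eq_mul, smul_eq_mul] at hcombo
    -- hcombo : a * f xI + (1 - a) * f y < 0
    have key : a * |d| ≤ f y / 2 := by
      have h1 : a * |d| ≤ (f y / (2 * (|d| + 1))) * |d| :=
        mul_le_mul_of_nonneg_right hale (abs_nonneg d)
      have h2 : (f y / (2 * (|d| + 1))) * |d| ≤ f y / 2 := by
        rw [div_mul_eq_mul_div, div_le_div_iff₀ hdpos two_pos]
        nlinarith [abs_nonneg d]
      linarith
    have had : -(f y / 2) ≤ a * d := by
      have : a * (-|d|) ≤ a * d := mul_le_mul_of_nonneg_left (neg_abs_le d) ha.le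
      nlinarith
    have hfxI : f xI = d + f y := by rw [hd]; ring
    rw [hfxI] at hcombo
    nlinarith
  -- the vertical coordinate of f
  set c : ℝ := f ((0 : EuclideanSpace ℝ J), (1 : ℝ)) with hc
  have hvert : ∀ t : ℝ, f ((0 : EuclideanSpace ℝ J), t) = t * c := by
    intro t
    have : ((0 : EuclideanSpace ℝ J), t) = t • (((0 : EuclideanSpace ℝ J), (1 : ℝ))) := by
      refine Prod.ext ?_ ?_ <;> simp
    rw [this, map_smul, smul_eq_mul]
  have hcnn : 0 ≤ c := by
    have h1 : f ((0 : EuclideanSpace ℝ J), (-1 : ℝ)) ≤ 0 :=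
      hfC _ (Cset_down Cset_zero (by norm_num))
    rw [hvert] at h1
    linarith
  have hcpos : 0 < c := by
    rcases lt_or_eq_of_le hcnn with h | h
    · exact h
    · exfalso
      have h1 := hf _ hintmem
      have h2 : f ((0 : EuclideanSpace ℝ J), m - 1) = (m - 1) * c := hvert (m - 1)
      rw [h2, ← h] at h1
      simp at h1
  -- the price vector
  refine ⟨(WithLp.toLp 2 (fun j => -f ((EuclideanSpace.single j 1 : EuclideanSpace ℝ J), (0 : ℝ)) / c) :
      EuclideanSpace ℝ J), ?_, ?_⟩
  all_goals {
    have hdot : ∀ z : EuclideanSpace ℝ J,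
        dotp (WithLp.toLp 2 (fun j => -f ((EuclideanSpace.single j 1 : EuclideanSpace ℝ J), (0 : ℝ)) / c) :
          EuclideanSpace ℝ J) z = -f (z, (0 : ℝ)) / c := by
      intro z
      have hz : ((z, (0 : ℝ)) : EuclideanSpace ℝ J × ℝ) =
          ∑ j, (z j) • (((EuclideanSpace.single j 1 : EuclideanSpace ℝ J), (0 : ℝ))) := by
        refine Prod.ext ?_ ?_
        · rw [Prod.fst_sum]
          have h1 : ∀ j : J, ((z j) • (((EuclideanSpace.single j 1 : EuclideanSpace ℝ J),
              (0 : ℝ)))).1 = (z j) • (EuclideanSpace.single j 1 : EuclideanSpace ℝ J) :=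
            fun j => rfl
          simp only [h1]
          ext k
          rw [WithLp.ofLp_sum, Finset.sum_apply]
          simp only [PiLp.smul_apply, EuclideanSpace.single_apply, smul_eq_mul, mul_ite,
            mul_one, mul_zero]
          rw [Finset.sum_ite_eq]
          simp
        · rw [Prod.snd_sum]
          simp
      have hfz : f (z, (0 : ℝ)) =
          ∑ j, (z j) * f (((EuclideanSpace.single j 1 : EuclideanSpace ℝ J), (0 : ℝ))) := by
        rw [hz, map_sum]
        refine Finset.sum_congr rfl fun j _ => ?_
        rw [map_smul, smul_eq_mul]
      unfold dotp
      rw [hfz]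
      have hterm : ∀ j : J,
          (-f ((EuclideanSpace.single j 1 : EuclideanSpace ℝ J), (0 : ℝ)) / c) * z j =
          -(z j * f ((EuclideanSpace.single j 1 : EuclideanSpace ℝ J), (0 : ℝ))) / c :=
        fun j => by ring
      simp only [WithLp.ofLp_toLp, hterm]
      rw [← Finset.sum_div, Finset.sum_neg_distrib]
    have hkey : ∀ (z : EuclideanSpace ℝ J) (t : ℝ), (z, t) ∈ C → t ≤
        dotp (WithLp.toLp 2 (fun j => -f ((EuclideanSpace.single j 1 : EuclideanSpace ℝ J), (0 : ℝ)) / c) :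
          EuclideanSpace ℝ J) z := by
      intro z t hzt
      have hle := hfC _ hzt
      have hsplit : f (z, t) = f (z, (0 : ℝ)) + t * c := by
        have hzz : ((z, t) : EuclideanSpace ℝ J × ℝ) = (z, (0:ℝ)) + ((0 : EuclideanSpace ℝ J), t) := by
          refine Prod.ext ?_ ?_ <;> simp
        rw [hzz, map_add, hvert]
      rw [hsplit] at hle
      rw [hdot, le_div_iff₀ hcpos]
      linarith
    first
    | -- dotp p g = 1
      ( have h1 := hkey _ _ (Cset_rg (1 : ℝ))
        have h2 := hkey _ _ (Cset_rg (-1 : ℝ))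
        rw [one_smul] at h1
        have hneg : ((-1 : ℝ) • g : EuclideanSpace ℝ J) = -g := by
          rw [neg_one_smul]
        rw [hneg] at h2
        have hdneg : dotp (WithLp.toLp 2 (fun j => -f ((EuclideanSpace.single j 1 : EuclideanSpace ℝ J),
            (0 : ℝ)) / c) : EuclideanSpace ℝ J) (-g) =
            -dotp (WithLp.toLp 2 (fun j => -f ((EuclideanSpace.single j 1 : EuclideanSpace ℝ J), (0 : ℝ)) / c) :
              EuclideanSpace ℝ J) g := by
          have := dotp_sub (WithLp.toLp 2 (fun j => -f ((EuclideanSpace.single j 1 : EuclideanSpace ℝ J),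
            (0 : ℝ)) / c) : EuclideanSpace ℝ J) 0 g
          simp only [zero_sub] at this
          rw [this]
          have h0 : dotp (WithLp.toLp 2 (fun j => -f ((EuclideanSpace.single j 1 : EuclideanSpace ℝ J),
              (0 : ℝ)) / c) : EuclideanSpace ℝ J) 0 = 0 := by
            unfold dotp
            simp
          rw [h0]; ring
        rw [hdneg] at h2
        linarith )
    | -- support property
      ( intro i w hw
        have hmem : ((w - x0 i : EuclideanSpace ℝ J), (0 : ℝ)) ∈ C := by
          apply Cset_single i
          simpa using hw
        have := hkey _ _ hmem
        rw [dotp_sub] at this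
        linarith )
  }
end
end

section
/- Suppose Assumption G holds (each u_i is upper semicontinuous, concave, u_i(x_i) finite, and u_i(x + r·g) > u_i(x) whenever u_i(x) > −∞ and r > 0) and Assumption Z holds: for each i, if u_i(y) > u_i(y') for some y' with u_i(y') > −∞, then u_i(y − ε·g) > −∞ for all sufficiently small ε > 0. Let x = (x_i)_{i∈I} be a feasible allocation and suppose there exists p ∈ ℝ^J with p·g = 1 such that for every i ∈ I and every w ∈ ℝ^J, p·w ≤ p·x_i implies u_i(w) ≤ u_i(x_i). Then x is Pareto efficient. -/
open scoped BigOperators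
open Metric Filter

noncomputable section

lemma dotp_add_smul {J : Type*} [Fintype J] (p y g : EuclideanSpace ℝ J) (r : ℝ) :
    dotp p (y + r • g) = dotp p y + r * dotp p g := by
  simp only [dotp, Finset.mul_sum]
  rw [← Finset.sum_add_distrib]
  refine Finset.sum_congr rfl fun j _ => ?_
  simp [PiLp.add_apply, PiLp.smul_apply, smul_eq_mul]
  ring

lemma dotp_sum {I J : Type*} [Fintype I] [Fintype J] (p : EuclideanSpace ℝ J)
    (x : I → EuclideanSpace ℝ J) : dotp p (∑ i, x i) = ∑ i, dotp p (x i) := by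
  simp only [dotp]
  have h : ∀ j, (∑ i, x i) j = ∑ i, x i j := fun j =>
    by rw [WithLp.ofLp_sum]; exact Finset.sum_apply j Finset.univ (fun i => (x i).ofLp)
  simp_rw [h, Finset.mul_sum]
  exact Finset.sum_comm

/-- Corollary ve2, Debreu's Theorem 1: a valuation-equilibrium
allocation is Pareto efficient. -/
theorem valuation_equilibrium_pareto
    {I J : Type*} [Fintype I] [Nonempty I] [Fintype J] [Nonempty J]
    (u : I → EuclideanSpace ℝ J → EReal) (g : EuclideanSpace ℝ J)
    (x : I → EuclideanSpace ℝ J)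
    (husc : ∀ i, UpperSemicontinuous (u i))
    (hconc : ∀ i, HypoConcave (u i))
    (hne_top : ∀ i y, u i y ≠ ⊤)
    (hfin : ∀ i, u i (x i) ≠ ⊥)
    (hmono : ∀ i, ∀ y : EuclideanSpace ℝ J, ∀ r : ℝ, u i y ≠ ⊥ → 0 < r →
      u i y < u i (y + r • g))
    (hZ : ∀ i, ∀ y y' : EuclideanSpace ℝ J, u i y' ≠ ⊥ → u i y' < u i y →
      ∃ ε0 : ℝ, 0 < ε0 ∧ ∀ ε : ℝ, 0 < ε → ε ≤ ε0 → u i (y - ε • g) ≠ ⊥)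
    (p : EuclideanSpace ℝ J) (hpg : dotp p g = 1)
    (hval : ∀ i, ∀ w : EuclideanSpace ℝ J, dotp p w ≤ dotp p (x i) →
      u i w ≤ u i (x i)) :
    ParetoEfficient u x := by
  rintro ⟨x', hsum, hle, i0, hlt⟩
  have hge : ∀ i, dotp p (x i) ≤ dotp p (x' i) := by
    intro i
    by_contra hlt'
    push_neg at hlt'
    set r : ℝ := dotp p (x i) - dotp p (x' i) with hr
    have hrpos : 0 < r := by simp [hr]; linarith
    have hnb : u i (x' i) ≠ ⊥ := fun h => hfin i (le_bot_iff.mp (h ▸ hle i))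
    have h1 : u i (x i) < u i (x' i + r • g) :=
      lt_of_le_of_lt (hle i) (hmono i (x' i) r hnb hrpos)
    have h2 : dotp p (x' i + r • g) ≤ dotp p (x i) := by
      rw [dotp_add_smul, hpg]; simp [hr]
    exact absurd (hval i _ h2) (not_le.mpr h1)
  have hgt : dotp p (x i0) < dotp p (x' i0) := by
    by_contra h
    push_neg at h
    exact absurd (hval i0 _ h) (not_le.mpr hlt)
  have : dotp p (∑ i, x i) < dotp p (∑ i, x' i) := by
    rw [dotp_sum, dotp_sum]
    exact Finset.sum_lt_sum (fun i _ => hge i) ⟨i0, Finset.mem_univ i0, hgt⟩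
  rw [hsum] at this
  exact lt_irrefl _ this
end
end
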